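/- Hohenberg–Kohn uniqueness via strict inequalities: Suppose μ₁, μ₂ are symmetric equilibrium measures for V₀+V₁, V₀+V₂ respectively, where V₁, V₂ are separable potentials arising from v₁, v₂ ∈ C(X), and suppose the marginals satisfy ρ₁ = ρ₂. If μ₁ is NOT an equilibrium measure for V₀+V₂ and μ₂ is NOT an equilibrium measure for V₀+V₁, then one derives the contradiction ρ₁(v₂-v₁) < λ_{V₀+V₂} - λ_{V₀+V₁} and ρ₂(v₁-v₂) < λ_{V₀+V₁} - λ_{V₀+V₂}. Hence either μ₁ is an equilibrium measure for V₀+V₂ or μ₂ is one for V₀+V₁. -/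

import Mathlib

open MeasureTheory Filter Topology
open scoped ENNReal NNReal

/-- Hohenberg–Kohn via strict inequalities.  In the
Donsker–Varadhan setting on `X^N`, if `μ₁, μ₂` are symmetric equilibrium
measures for `V₀+V₁`, `V₀+V₂` (with `V₁, V₂` separable, arising from
`v₁, v₂ ∈ C(X)`) whose 1-particle marginals coincide, then `μ₁` is an
equilibrium measure for `V₀+V₂` or `μ₂` is one for `V₀+V₁`. -/
theorem stmt_17 {X : Type*} [MetricSpace X] [CompactSpace X]
    [MeasurableSpace X] [BorelSpace X]
    (N : ℕ) (hN : 0 < N)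
    -- abstract Donsker–Varadhan rate function and principal eigenvalue
    (I : ProbabilityMeasure (Fin N → X) → EReal)
    (lam : C(Fin N → X, ℝ) → ℝ)
    (hDV : ∀ (W : C(Fin N → X, ℝ)) (μ : ProbabilityMeasure (Fin N → X)),
      ((∫ y, W y ∂(μ : Measure (Fin N → X)) : ℝ) : EReal) - I μ ≤ (lam W : EReal))
    -- potentials: `V₀` symmetric-type background, `V₁, V₂` separable from `v₁, v₂`
    (V₀ V₁ V₂ : C(Fin N → X, ℝ)) (v₁ v₂ : C(X, ℝ))
    (hV₁ : ∀ y : Fin N → X, V₁ y = (∑ i, v₁ (y i)) / N)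
    (hV₂ : ∀ y : Fin N → X, V₂ y = (∑ i, v₂ (y i)) / N)
    -- symmetric equilibrium measures
    (μ₁ μ₂ : ProbabilityMeasure (Fin N → X))
    (hsym₁ : ∀ σ : Equiv.Perm (Fin N),
      (μ₁ : Measure (Fin N → X)).map (fun y i => y (σ i)) = μ₁)
    (hsym₂ : ∀ σ : Equiv.Perm (Fin N),
      (μ₂ : Measure (Fin N → X)).map (fun y i => y (σ i)) = μ₂)
    (hE₁ : (lam (V₀ + V₁) : EReal) =
      ((∫ y, (V₀ + V₁) y ∂(μ₁ : Measure (Fin N → X)) : ℝ) : EReal) - I μ₁)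
    (hE₂ : (lam (V₀ + V₂) : EReal) =
      ((∫ y, (V₀ + V₂) y ∂(μ₂ : Measure (Fin N → X)) : ℝ) : EReal) - I μ₂)
    -- the 1-particle marginals
    (ρ₁ ρ₂ : ProbabilityMeasure X)
    (hρ₁ : ∀ f : C(X, ℝ), ∫ x, f x ∂(ρ₁ : Measure X)
      = ∫ y, f (y ⟨0, hN⟩) ∂(μ₁ : Measure (Fin N → X)))
    (hρ₂ : ∀ f : C(X, ℝ), ∫ x, f x ∂(ρ₂ : Measure X)
      = ∫ y, f (y ⟨0, hN⟩) ∂(μ₂ : Measure (Fin N → X)))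
    (hρ : ρ₁ = ρ₂) :
    ((lam (V₀ + V₂) : EReal) =
      ((∫ y, (V₀ + V₂) y ∂(μ₁ : Measure (Fin N → X)) : ℝ) : EReal) - I μ₁)
    ∨ ((lam (V₀ + V₁) : EReal) =
      ((∫ y, (V₀ + V₁) y ∂(μ₂ : Measure (Fin N → X)) : ℝ) : EReal) - I μ₂) := by
  classical
  by_contra hcon
  push_neg at hcon
  obtain ⟨h1, h2⟩ := hcon
  -- integrability of continuous functions on a compact space
  have hint : ∀ (μ : ProbabilityMeasure (Fin N → X)) (f : (Fin N → X) → ℝ),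
      Continuous f → Integrable f (μ : Measure (Fin N → X)) := fun μ f hf =>
    hf.integrable_of_hasCompactSupport (HasCompactSupport.of_compactSpace f)
  -- symmetry: reduce separable potentials to the 0-th coordinate
  have key : ∀ (μ : ProbabilityMeasure (Fin N → X)),
      (∀ σ : Equiv.Perm (Fin N),
        (μ : Measure (Fin N → X)).map (fun y i => y (σ i)) = μ) →
      ∀ (v : C(X, ℝ)) (V : C(Fin N → X, ℝ)),
      (∀ y : Fin N → X, V y = (∑ i, v (y i)) / N) →
      ∫ y, V y ∂(μ : Measure (Fin N → X))
        = ∫ y, v (y ⟨0, hN⟩) ∂(μ : Measure (Fin N → X)) := by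
    intro μ hsym v V hV
    have hi : ∀ i : Fin N, ∫ y, v (y i) ∂(μ : Measure (Fin N → X))
        = ∫ y, v (y ⟨0, hN⟩) ∂(μ : Measure (Fin N → X)) := by
      intro i
      set σ := Equiv.swap (⟨0, hN⟩ : Fin N) i with hσ
      have hmeas : Measurable (fun (y : Fin N → X) (j : Fin N) => y (σ j)) :=
        measurable_pi_lambda _ (fun j => measurable_pi_apply _)
      calc ∫ y, v (y i) ∂(μ : Measure (Fin N → X))
          = ∫ y, v (y i) ∂((μ : Measure (Fin N → X)).map
              (fun y j => y (σ j))) := by rw [hsym σ]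
        _ = ∫ y, v ((fun j => y (σ j)) i) ∂(μ : Measure (Fin N → X)) := by
            rw [integral_map hmeas.aemeasurable]
            exact (v.continuous.comp (continuous_apply i)).aestronglyMeasurable
        _ = ∫ y, v (y ⟨0, hN⟩) ∂(μ : Measure (Fin N → X)) := by
            simp only [hσ, Equiv.swap_apply_right]
    calc ∫ y, V y ∂(μ : Measure (Fin N → X))
        = ∫ y, (∑ i, v (y i)) / N ∂(μ : Measure (Fin N → X)) := by
          simp only [hV]
      _ = (∫ y, (∑ i, v (y i)) ∂(μ : Measure (Fin N → X))) / N := by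
          rw [integral_div]
      _ = (∑ i : Fin N, ∫ y, v (y i) ∂(μ : Measure (Fin N → X))) / N := by
          rw [integral_finset_sum]
          intro i _
          exact hint μ _ (v.continuous.comp (continuous_apply i))
      _ = (∑ _i : Fin N, ∫ y, v (y ⟨0, hN⟩) ∂(μ : Measure (Fin N → X))) / N := by
          simp only [hi]
      _ = ∫ y, v (y ⟨0, hN⟩) ∂(μ : Measure (Fin N → X)) := by
          rw [Finset.sum_const, Finset.card_univ, Fintype.card_fin]
          field_simp
          exact nsmul_eq_mul _ _
  -- the common marginal values
  have hs₁ : ∫ y, v₁ (y ⟨0, hN⟩) ∂(μ₁ : Measure (Fin N → X))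
      = ∫ y, v₁ (y ⟨0, hN⟩) ∂(μ₂ : Measure (Fin N → X)) := by
    rw [← hρ₁ v₁, hρ, hρ₂ v₁]
  have hs₂ : ∫ y, v₂ (y ⟨0, hN⟩) ∂(μ₁ : Measure (Fin N → X))
      = ∫ y, v₂ (y ⟨0, hN⟩) ∂(μ₂ : Measure (Fin N → X)) := by
    rw [← hρ₁ v₂, hρ, hρ₂ v₂]
  set s₁ : ℝ := ∫ y, v₁ (y ⟨0, hN⟩) ∂(μ₁ : Measure (Fin N → X)) with hs₁def
  set s₂ : ℝ := ∫ y, v₂ (y ⟨0, hN⟩) ∂(μ₁ : Measure (Fin N → X)) with hs₂def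
  set a : ℝ := ∫ y, V₀ y ∂(μ₁ : Measure (Fin N → X)) with hadef
  set b : ℝ := ∫ y, V₀ y ∂(μ₂ : Measure (Fin N → X)) with hbdef
  -- decompose all four integrals
  have hintV₀₁ := hint μ₁ V₀ V₀.continuous
  have hintV₀₂ := hint μ₂ V₀ V₀.continuous
  have hintV₁₁ := hint μ₁ V₁ V₁.continuous
  have hintV₂₁ := hint μ₁ V₂ V₂.continuous
  have hintV₁₂ := hint μ₂ V₁ V₁.continuous
  have hintV₂₂ := hint μ₂ V₂ V₂.continuous
  have d11 : ∫ y, (V₀ + V₁) y ∂(μ₁ : Measure (Fin N → X)) = a + s₁ := by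
    simp only [ContinuousMap.add_apply]
    rw [integral_add hintV₀₁ hintV₁₁, key μ₁ hsym₁ v₁ V₁ hV₁]
  have d21 : ∫ y, (V₀ + V₂) y ∂(μ₁ : Measure (Fin N → X)) = a + s₂ := by
    simp only [ContinuousMap.add_apply]
    rw [integral_add hintV₀₁ hintV₂₁, key μ₁ hsym₁ v₂ V₂ hV₂]
  have d12 : ∫ y, (V₀ + V₁) y ∂(μ₂ : Measure (Fin N → X)) = b + s₁ := by
    simp only [ContinuousMap.add_apply]
    rw [integral_add hintV₀₂ hintV₁₂, key μ₂ hsym₂ v₁ V₁ hV₁, ← hs₁]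
  have d22 : ∫ y, (V₀ + V₂) y ∂(μ₂ : Measure (Fin N → X)) = b + s₂ := by
    simp only [ContinuousMap.add_apply]
    rw [integral_add hintV₀₂ hintV₂₂, key μ₂ hsym₂ v₂ V₂ hV₂, ← hs₂]
  -- the rate function values are finite
  obtain ⟨c₁, hc₁⟩ : ∃ c : ℝ, I μ₁ = (c : EReal) := by
    have hE₁' := hE₁
    set e := I μ₁ with he
    clear_value e
    induction e using EReal.rec with
    | bot => simp only [EReal.coe_sub_bot] at hE₁'; exact absurd hE₁' (EReal.coe_ne_top _)
    | coe r => exact ⟨r, rfl⟩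
    | top =>
        rw [EReal.sub_top] at hE₁'
        exact absurd hE₁' (EReal.coe_ne_bot _)
  obtain ⟨c₂, hc₂⟩ : ∃ c : ℝ, I μ₂ = (c : EReal) := by
    have hE₂' := hE₂
    set e := I μ₂ with he
    clear_value e
    induction e using EReal.rec with
    | bot => simp only [EReal.coe_sub_bot] at hE₂'; exact absurd hE₂' (EReal.coe_ne_top _)
    | coe r => exact ⟨r, rfl⟩
    | top =>
        rw [EReal.sub_top] at hE₂'
        exact absurd hE₂' (EReal.coe_ne_bot _)
  -- convert everything to real arithmetic
  rw [hc₁, d11, ← EReal.coe_sub, EReal.coe_eq_coe_iff] at hE₁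
  rw [hc₂, d22, ← EReal.coe_sub, EReal.coe_eq_coe_iff] at hE₂
  have hlt₁ : a + s₂ - c₁ < lam (V₀ + V₂) := by
    have hle := hDV (V₀ + V₂) μ₁
    rw [hc₁, d21, ← EReal.coe_sub] at hle
    have hne : (↑(a + s₂ - c₁) : EReal) ≠ (lam (V₀ + V₂) : EReal) := by
      intro h
      apply h1
      rw [hc₁, d21, ← EReal.coe_sub, ← h]
    exact_mod_cast lt_of_le_of_ne hle hne
  have hlt₂ : b + s₁ - c₂ < lam (V₀ + V₁) := by
    have hle := hDV (V₀ + V₁) μ₂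
    rw [hc₂, d12, ← EReal.coe_sub] at hle
    have hne : (↑(b + s₁ - c₂) : EReal) ≠ (lam (V₀ + V₁) : EReal) := by
      intro h
      apply h2
      rw [hc₂, d12, ← EReal.coe_sub, ← h]
    exact_mod_cast lt_of_le_of_ne hle hne
  linarith
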